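/- arXiv:2507.04798 — 4 statements merged into one kernel-verified Lean document; each statement's English description precedes it below -/
import Mathlib

section
/- Let X and Y be real Banach spaces and let ζ : X → Y be a Fredholm operator (a continuous linear map with finite-dimensional kernel and closed range of finite codimension). Let E be a finite-dimensional subspace of Y such that Y = range(ζ) + E and range(ζ) ∩ E = {0}. Then there exists a constant c > 0 (depending on E and ζ) such that for every finite-dimensional subspace E' of Y with sup over the unit sphere of E of dist(x, E') ≤ c, one has Y = range(ζ) + E'. -/
/-- **Lemma 3.6.** Let `X`, `Y` be real Banach spaces, `ζ : X → Y` a Fredholm operator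
(continuous linear, finite-dimensional kernel, closed range of finite codimension),
and `E` a finite-dimensional subspace of `Y` with `Y = range ζ + E` and
`range ζ ∩ E = {0}`. Then there is `c > 0` such that every finite-dimensional subspace
`E'` of `Y` with `dist(x, E') ≤ c` for all `x` in the unit sphere of `E` satisfies
`Y = range ζ + E'`. -/
theorem stmt_0
    {X Y : Type*} [NormedAddCommGroup X] [NormedSpace ℝ X] [CompleteSpace X]
    [NormedAddCommGroup Y] [NormedSpace ℝ Y] [CompleteSpace Y]
    (ζ : X →L[ℝ] Y)
    (hker : FiniteDimensional ℝ (LinearMap.ker (ζ : X →ₗ[ℝ] Y)))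
    (hclosed : IsClosed (LinearMap.range (ζ : X →ₗ[ℝ] Y) : Set Y))
    (hcoker : FiniteDimensional ℝ (Y ⧸ LinearMap.range (ζ : X →ₗ[ℝ] Y)))
    (E : Submodule ℝ Y) (hE : FiniteDimensional ℝ E)
    (hsum : LinearMap.range (ζ : X →ₗ[ℝ] Y) ⊔ E = ⊤)
    (hint : LinearMap.range (ζ : X →ₗ[ℝ] Y) ⊓ E = ⊥) :
    ∃ c > 0, ∀ E' : Submodule ℝ Y, FiniteDimensional ℝ E' →
      (∀ x ∈ E, ‖x‖ = 1 → Metric.infDist x (E' : Set Y) ≤ c) →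
      LinearMap.range (ζ : X →ₗ[ℝ] Y) ⊔ E' = ⊤ := by
  classical
  set R : Submodule ℝ Y := LinearMap.range (ζ : X →ₗ[ℝ] Y) with hR
  haveI : IsClosed (R : Set Y) := hclosed
  -- the restriction of the quotient map to E
  let φ : E →ₗ[ℝ] Y ⧸ R := R.mkQ.comp E.subtype
  have hφinj : Function.Injective φ := by
    rw [← LinearMap.ker_eq_bot]
    ext ⟨x, hx⟩
    simp only [LinearMap.mem_ker, Submodule.mem_bot, φ, LinearMap.comp_apply,
      Submodule.subtype_apply, Submodule.mkQ_apply, Submodule.Quotient.mk_eq_zero]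
    constructor
    · intro hxR
      have : x ∈ R ⊓ E := ⟨hxR, hx⟩
      rw [hint] at this
      exact Subtype.ext (by simpa using this)
    · intro h
      have : x = 0 := by simpa using congrArg Subtype.val h
      simp [this]
  have hφsurj : Function.Surjective φ := by
    intro q
    obtain ⟨y, rfl⟩ := Submodule.mkQ_surjective R q
    have hy : y ∈ R ⊔ E := by rw [hsum]; trivial
    obtain ⟨r, hr, e, he, rfl⟩ := Submodule.mem_sup.mp hy
    refine ⟨⟨e, he⟩, ?_⟩
    simp only [φ, LinearMap.comp_apply, Submodule.subtype_apply, Submodule.mkQ_apply]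
    rw [Submodule.Quotient.eq]
    have : e - (r + e) = -r := by abel
    rw [this]
    exact R.neg_mem hr
  let eqv : E ≃ₗ[ℝ] Y ⧸ R := LinearEquiv.ofBijective φ ⟨hφinj, hφsurj⟩
  -- the inverse is continuous (finite dimensions), get bound K
  let g : (Y ⧸ R) →L[ℝ] E := LinearMap.toContinuousLinearMap eqv.symm.toLinearMap
  set K : ℝ := ‖g‖ + 1 with hK
  have hKpos : 0 < K := by positivity
  have hKbound : ∀ q : Y ⧸ R, ‖(eqv.symm q : Y)‖ ≤ K * ‖q‖ := by
    intro q
    have h1 : ‖g q‖ ≤ ‖g‖ * ‖q‖ := g.le_opNorm q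
    have h2 : ‖g‖ * ‖q‖ ≤ K * ‖q‖ := by
      apply mul_le_mul_of_nonneg_right _ (norm_nonneg q)
      simp [hK]
    calc ‖(eqv.symm q : Y)‖ = ‖g q‖ := rfl
      _ ≤ K * ‖q‖ := h1.trans h2
  refine ⟨1 / (4 * K), by positivity, ?_⟩
  intro E' hE' hdist
  by_contra hne
  -- F = image of E' in the quotient; if R ⊔ E' ≠ ⊤ then F ≠ ⊤
  set F : Submodule ℝ (Y ⧸ R) := E'.map R.mkQ with hF
  have hFne : F ≠ ⊤ := by
    intro htop
    apply hne
    rw [eq_top_iff]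
    intro y _
    have : R.mkQ y ∈ F := htop ▸ Submodule.mem_top
    obtain ⟨e', he', heq⟩ := this
    have : y - e' ∈ R := by
      rw [← Submodule.Quotient.mk_eq_zero]
      have : R.mkQ (y - e') = R.mkQ y - R.mkQ e' := map_sub _ _ _
      simp only [Submodule.mkQ_apply] at this heq ⊢
      rw [this, heq, sub_self]
    exact Submodule.mem_sup.mpr ⟨y - e', this, e', he', by abel⟩
  haveI : FiniteDimensional ℝ (Y ⧸ R) := hcoker
  have hFc : IsClosed (F : Set (Y ⧸ R)) := Submodule.closed_of_finiteDimensional F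
  obtain ⟨q, hqF, hq⟩ := riesz_lemma hFc
    (by
      by_contra h
      push_neg at h
      exact hFne (eq_top_iff.mpr fun z _ => h z))
    (show (2:ℝ)/3 < 1 by norm_num)
  have hqne : q ≠ 0 := fun h => hqF (h ▸ F.zero_mem)
  have hqnorm : 0 < ‖q‖ := norm_pos_iff.mpr hqne
  -- lift q to x ∈ E
  set x : E := eqv.symm q with hx
  have hxq : R.mkQ (x : Y) = q := eqv.apply_symm_apply q
  have hxne : (x : Y) ≠ 0 := by
    intro h
    apply hqne
    rw [← hxq, h, map_zero]
  have hxnorm : 0 < ‖(x : Y)‖ := norm_pos_iff.mpr hxne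
  have hxle : ‖(x : Y)‖ ≤ K * ‖q‖ := hKbound q
  -- the normalized vector
  set x' : Y := ‖(x : Y)‖⁻¹ • (x : Y) with hx'
  have hx'E : x' ∈ E := E.smul_mem _ x.2
  have hx'norm : ‖x'‖ = 1 := by
    rw [hx', norm_smul, norm_inv, norm_norm, inv_mul_cancel₀ (ne_of_gt hxnorm)]
  have h1 := hdist x' hx'E hx'norm
  have hE'ne : (E' : Set Y).Nonempty := ⟨0, E'.zero_mem⟩
  have h2 : Metric.infDist x' (E' : Set Y) < 1 / (2 * K) := by
    apply lt_of_le_of_lt h1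
    rw [div_lt_div_iff₀ (by positivity) (by positivity)]
    nlinarith
  obtain ⟨e', he', hee⟩ := Metric.infDist_lt_iff hE'ne |>.mp h2
  rw [dist_eq_norm] at hee
  -- push to quotient
  have hquot : ‖R.mkQ x' - R.mkQ e'‖ < 1 / (2 * K) := by
    calc ‖R.mkQ x' - R.mkQ e'‖ = ‖R.mkQ (x' - e')‖ := by rw [map_sub]
      _ ≤ ‖x' - e'‖ := Submodule.Quotient.norm_mk_le _ _
      _ < 1 / (2 * K) := hee
  have hmkx' : R.mkQ x' = ‖(x : Y)‖⁻¹ • q := by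
    rw [hx', map_smul, hxq]
  -- y := ‖x‖ • mkQ e' belongs to F
  have hyF : ‖(x : Y)‖ • R.mkQ e' ∈ F := Submodule.smul_mem F _ ⟨e', he', rfl⟩
  have hqy := hq _ hyF
  have hscale : ‖q - ‖(x : Y)‖ • R.mkQ e'‖ = ‖(x : Y)‖ * ‖R.mkQ x' - R.mkQ e'‖ := by
    have heq2 : q - ‖(x : Y)‖ • R.mkQ e' = ‖(x : Y)‖ • (R.mkQ x' - R.mkQ e') := by
      rw [smul_sub, hmkx', smul_smul, mul_inv_cancel₀ (ne_of_gt hxnorm), one_smul]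
    rw [heq2, norm_smul, Real.norm_eq_abs, abs_of_pos hxnorm]
  rw [hscale] at hqy
  have hlt : ‖(x : Y)‖ * ‖R.mkQ x' - R.mkQ e'‖ < (K * ‖q‖) * (1 / (2 * K)) := by
    apply mul_lt_mul' hxle hquot (norm_nonneg _) (by positivity)
  have : (2:ℝ)/3 * ‖q‖ < (K * ‖q‖) * (1 / (2 * K)) := lt_of_le_of_lt hqy hlt
  have hcontra : (K * ‖q‖) * (1 / (2 * K)) = ‖q‖ / 2 := by
    field_simp
  rw [hcontra] at this
  nlinarith
end

section
/- Let X and Y be real Banach spaces and let ζ : X → Y be a continuous linear map with closed range. Let E be a finite-dimensional subspace of Y such that Y = range(ζ) + E and range(ζ) ∩ E = {0}. If E' is a finite-dimensional subspace of Y satisfying sup_{x ∈ E, ‖x‖ = 1} dist(x, E') < inf_{x ∈ E, ‖x‖ = 1} dist(x, range(ζ)), then Y = range(ζ) + E'. -/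
/-- **Explicit-constant form of Lemma 3.6.** If
`sup_{x ∈ E, ‖x‖ = 1} dist(x, E') < inf_{x ∈ E, ‖x‖ = 1} dist(x, range ζ)`,
then `Y = range ζ + E'`. -/
theorem stmt_1
    {X Y : Type*} [NormedAddCommGroup X] [NormedSpace ℝ X] [CompleteSpace X]
    [NormedAddCommGroup Y] [NormedSpace ℝ Y] [CompleteSpace Y]
    (ζ : X →L[ℝ] Y)
    (hclosed : IsClosed (LinearMap.range (ζ : X →ₗ[ℝ] Y) : Set Y))
    (E : Submodule ℝ Y) (hE : FiniteDimensional ℝ E)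
    (hsum : LinearMap.range (ζ : X →ₗ[ℝ] Y) ⊔ E = ⊤)
    (hint : LinearMap.range (ζ : X →ₗ[ℝ] Y) ⊓ E = ⊥)
    (E' : Submodule ℝ Y) (hE' : FiniteDimensional ℝ E')
    (hlt : (⨆ x : {x : Y // x ∈ E ∧ ‖x‖ = 1}, Metric.infDist (x : Y) (E' : Set Y)) <
      ⨅ x : {x : Y // x ∈ E ∧ ‖x‖ = 1},
        Metric.infDist (x : Y) (LinearMap.range (ζ : X →ₗ[ℝ] Y) : Set Y)) :
    LinearMap.range (ζ : X →ₗ[ℝ] Y) ⊔ E' = ⊤ := by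
  classical
  set R : Submodule ℝ Y := LinearMap.range (ζ : X →ₗ[ℝ] Y) with hRdef
  by_cases hne : Nonempty {x : Y // x ∈ E ∧ ‖x‖ = 1}
  swap
  · rw [not_nonempty_iff] at hne
    rw [Real.iSup_of_isEmpty, Real.iInf_of_isEmpty] at hlt
    exact absurd hlt (lt_irrefl 0)
  set s : ℝ := ⨆ x : {x : Y // x ∈ E ∧ ‖x‖ = 1}, Metric.infDist (x : Y) (E' : Set Y) with hs
  set c : ℝ := ⨅ x : {x : Y // x ∈ E ∧ ‖x‖ = 1},
      Metric.infDist (x : Y) (R : Set Y) with hc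
  have hcompl : IsCompl R E := ⟨disjoint_iff.mpr hint, codisjoint_iff.mpr hsum⟩
  set P : Y →ₗ[ℝ] E := E.linearProjOfIsCompl R hcompl.symm with hP
  have hPleft : ∀ x : E, P (x : Y) = x := fun x =>
    Submodule.linearProjOfIsCompl_apply_left hcompl.symm x
  have hker : LinearMap.ker P = R := Submodule.linearProjOfIsCompl_ker hcompl.symm
  have hbddA : BddAbove (Set.range fun x : {x : Y // x ∈ E ∧ ‖x‖ = 1} =>
      Metric.infDist (x : Y) (E' : Set Y)) := by
    refine ⟨1, ?_⟩
    rintro y ⟨x, rfl⟩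
    calc Metric.infDist (x : Y) (E' : Set Y) ≤ dist (x : Y) 0 :=
          Metric.infDist_le_dist_of_mem (Submodule.zero_mem E')
      _ = 1 := by rw [dist_zero_right, x.2.2]
  have hbddB : BddBelow (Set.range fun x : {x : Y // x ∈ E ∧ ‖x‖ = 1} =>
      Metric.infDist (x : Y) (R : Set Y)) := by
    refine ⟨0, ?_⟩
    rintro y ⟨x, rfl⟩
    exact Metric.infDist_nonneg
  have hle_s : ∀ x : {x : Y // x ∈ E ∧ ‖x‖ = 1},
      Metric.infDist (x : Y) (E' : Set Y) ≤ s := fun x => le_ciSup hbddA x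
  have hc_le : ∀ x : {x : Y // x ∈ E ∧ ‖x‖ = 1},
      c ≤ Metric.infDist (x : Y) (R : Set Y) := fun x => ciInf_le hbddB x
  have hs0 : 0 ≤ s := by
    obtain ⟨x⟩ := hne
    exact le_trans Metric.infDist_nonneg (hle_s x)
  have hc0 : 0 < c := lt_of_le_of_lt hs0 hlt
  -- key estimate: c * ‖P z‖ ≤ ‖z‖
  have key : ∀ z : Y, c * ‖(P z : Y)‖ ≤ ‖z‖ := by
    intro z
    rcases eq_or_ne (P z) 0 with h0 | h0
    · rw [h0]
      simpa using norm_nonneg z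
    have hn0 : (P z : Y) ≠ 0 := fun h => h0 (Subtype.ext h)
    have hnpos : 0 < ‖(P z : Y)‖ := norm_pos_iff.mpr hn0
    set u : Y := ‖(P z : Y)‖⁻¹ • (P z : Y) with hu
    have huE : u ∈ E := E.smul_mem _ (P z).2
    have hun : ‖u‖ = 1 := norm_smul_inv_norm hn0
    have hmemR : (P z : Y) - z ∈ R := by
      have : z - (P z : Y) ∈ LinearMap.ker P := by
        rw [LinearMap.mem_ker, map_sub, hPleft (P z), sub_self]
      rw [hker] at this
      simpa using R.neg_mem this
    have hw : ‖(P z : Y)‖⁻¹ • ((P z : Y) - z) ∈ (R : Set Y) :=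
      R.smul_mem _ hmemR
    have h1 : c ≤ Metric.infDist u (R : Set Y) := hc_le ⟨u, huE, hun⟩
    have h2 : Metric.infDist u (R : Set Y) ≤ ‖(P z : Y)‖⁻¹ * ‖z‖ := by
      calc Metric.infDist u (R : Set Y)
          ≤ dist u (‖(P z : Y)‖⁻¹ • ((P z : Y) - z)) :=
            Metric.infDist_le_dist_of_mem hw
        _ = ‖‖(P z : Y)‖⁻¹ • z‖ := by
            rw [dist_eq_norm, hu, ← smul_sub, sub_sub_cancel]
        _ = ‖(P z : Y)‖⁻¹ * ‖z‖ := by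
            rw [norm_smul, Real.norm_eq_abs, abs_of_pos (inv_pos.mpr hnpos)]
    have := le_trans h1 h2
    rw [mul_comm]
    calc ‖(P z : Y)‖ * c ≤ ‖(P z : Y)‖ * (‖(P z : Y)‖⁻¹ * ‖z‖) := by
          exact mul_le_mul_of_nonneg_left this (le_of_lt hnpos)
      _ = ‖z‖ := by field_simp
  -- F = image of E' under P
  set F : Submodule ℝ E := E'.map P with hF
  haveI : FiniteDimensional ℝ F := Module.Finite.map E' P
  have hFtop : F = ⊤ := by
    by_contra hFt
    obtain ⟨x₀, -, hx₀⟩ := SetLike.exists_of_lt (show F < ⊤ from Ne.lt_top hFt)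
    set r : ℝ := (s / c + 1) / 2 with hr
    have hsc1 : s / c < 1 := (div_lt_one hc0).mpr hlt
    have hr1 : r < 1 := by rw [hr]; linarith
    have hsrc : s < r * c := by
      have : s / c < r := by rw [hr]; linarith
      exact (div_lt_iff₀ hc0).mp this
    have hFclosed : IsClosed (F : Set E) := F.closed_of_finiteDimensional
    obtain ⟨v, hvF, hv⟩ := riesz_lemma hFclosed ⟨x₀, hx₀⟩ hr1
    have hv0 : v ≠ 0 := fun h => hvF (h ▸ F.zero_mem)
    have hvpos : 0 < ‖v‖ := norm_pos_iff.mpr hv0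
    set e : E := ‖v‖⁻¹ • v with he
    have hen : ‖e‖ = 1 := norm_smul_inv_norm hv0
    have henY : ‖(e : Y)‖ = 1 := hen
    have heE : (e : Y) ∈ E := e.2
    have hinf : Metric.infDist (e : Y) (E' : Set Y) < r * c :=
      lt_of_le_of_lt (hle_s ⟨(e : Y), heE, henY⟩) hsrc
    obtain ⟨e', he'E, he'd⟩ := (Metric.infDist_lt_iff ⟨0, Submodule.zero_mem E'⟩).mp hinf
    -- apply key to z = e - e'
    have hPz : P ((e : Y) - e') = e - P e' := by rw [map_sub, hPleft e]
    have hk := key ((e : Y) - e')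
    rw [hPz] at hk
    have hnormz : ‖(e : Y) - e'‖ < r * c := by rwa [dist_eq_norm] at he'd
    have hlt2 : c * ‖((e - P e' : E) : Y)‖ < r * c := lt_of_le_of_lt hk hnormz
    have hlt3 : ‖e - P e'‖ < r := by
      have hco : ‖((e - P e' : E) : Y)‖ = ‖e - P e'‖ := rfl
      rw [hco, mul_comm] at hlt2
      exact lt_of_mul_lt_mul_right hlt2 (le_of_lt hc0)
    -- Riesz inequality
    have hyF : ‖v‖ • P e' ∈ F := F.smul_mem _ ⟨e', he'E, rfl⟩
    have hriesz := hv (‖v‖ • P e') hyF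
    have hveq : v - ‖v‖ • P e' = ‖v‖ • (e - P e') := by
      rw [smul_sub, he, smul_smul, mul_inv_cancel₀ (ne_of_gt hvpos), one_smul]
    rw [hveq, norm_smul, Real.norm_eq_abs, abs_of_pos hvpos] at hriesz
    have : r ≤ ‖e - P e'‖ := le_of_mul_le_mul_left (by linarith [hriesz]) hvpos
    linarith
  -- conclude
  rw [eq_top_iff, ← hsum, sup_le_iff]
  constructor
  · exact le_sup_left
  · intro y hy
    have : (⟨y, hy⟩ : E) ∈ F := hFtop ▸ Submodule.mem_top
    obtain ⟨e', he'E, hPe'⟩ := this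
    have hmemR : y - e' ∈ R := by
      have : y - e' ∈ LinearMap.ker P := by
        rw [LinearMap.mem_ker, map_sub, hPe']
        have : P y = ⟨y, hy⟩ := hPleft ⟨y, hy⟩
        rw [this, sub_self]
      rwa [hker] at this
    have : y = (y - e') + e' := by abel
    rw [this]
    exact Submodule.add_mem _ (Submodule.mem_sup_left hmemR) (Submodule.mem_sup_right he'E)
end

section
/- Let X and Y be real Banach spaces and let ζ : X → Y be a Fredholm operator (a continuous linear map with finite-dimensional kernel and closed range of finite codimension). Let E be a finite-dimensional subspace of Y such that Y = range(ζ) + E (the intersection range(ζ) ∩ E need not be trivial). Then there exists a constant c > 0 (depending on E and ζ) such that for every finite-dimensional subspace E' of Y with sup over the unit sphere of E of dist(x, E') ≤ c, one has Y = range(ζ) + E'. -/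
private lemma aux_vanish {Y : Type*} [NormedAddCommGroup Y] [NormedSpace ℝ Y]
    (V : Submodule ℝ Y) (hV : IsClosed (V : Set Y)) {x : Y} (hx : x ∉ V) :
    ∃ f : Y →L[ℝ] ℝ, f ≠ 0 ∧ ∀ v ∈ V, f v = 0 := by
  obtain ⟨f, u, hfs, hux⟩ := geometric_hahn_banach_closed_point V.convex hV hx
  have hvanish : ∀ v ∈ V, f v = 0 := by
    intro v hv
    by_contra hfv
    have h1 := hfs (((|u| + 1) / f v) • v) (V.smul_mem _ hv)
    rw [map_smul, smul_eq_mul, div_mul_cancel₀ _ hfv] at h1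
    have := le_abs_self u
    linarith
  have hu0 : 0 < u := by simpa using hfs 0 V.zero_mem
  refine ⟨f, ?_, hvanish⟩
  intro h
  rw [h] at hux
  simp at hux
  linarith

set_option maxHeartbeats 1000000

/-- **Corollary 3.3.** Same as Lemma 3.6, but without assuming
`range ζ ∩ E = {0}`. -/
theorem stmt_2
    {X Y : Type*} [NormedAddCommGroup X] [NormedSpace ℝ X] [CompleteSpace X]
    [NormedAddCommGroup Y] [NormedSpace ℝ Y] [CompleteSpace Y]
    (ζ : X →L[ℝ] Y)
    (hker : FiniteDimensional ℝ (LinearMap.ker (ζ : X →ₗ[ℝ] Y)))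
    (hclosed : IsClosed (LinearMap.range (ζ : X →ₗ[ℝ] Y) : Set Y))
    (hcoker : FiniteDimensional ℝ (Y ⧸ LinearMap.range (ζ : X →ₗ[ℝ] Y)))
    (E : Submodule ℝ Y) (hE : FiniteDimensional ℝ E)
    (hsum : LinearMap.range (ζ : X →ₗ[ℝ] Y) ⊔ E = ⊤) :
    ∃ c > 0, ∀ E' : Submodule ℝ Y, FiniteDimensional ℝ E' →
      (∀ x ∈ E, ‖x‖ = 1 → Metric.infDist x (E' : Set Y) ≤ c) →
      LinearMap.range (ζ : X →ₗ[ℝ] Y) ⊔ E' = ⊤ := by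
  classical
  by_cases htop : LinearMap.range (ζ : X →ₗ[ℝ] Y) = ⊤
  · exact ⟨1, one_pos, fun E' _ _ => by rw [htop, top_sup_eq]⟩
  set R := LinearMap.range (ζ : X →ₗ[ℝ] Y) with hRdef
  haveI : IsClosed (R : Set Y) := hclosed
  haveI : Nontrivial (Y ⧸ R) :=
    Submodule.Quotient.nontrivial_iff.mpr htop
  set n := Module.finrank ℝ (Y ⧸ R) with hndef
  have hn : 0 < n := Module.finrank_pos
  haveI : Nonempty (Fin n) := Fin.pos_iff_nonempty.mp hn
  let b := Module.finBasis ℝ (Y ⧸ R)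
  have hmap : Submodule.map R.mkQ E = ⊤ := (Submodule.map_mkQ_eq_top R E).mpr hsum
  have hlift : ∀ i : Fin n, ∃ e : Y, e ∈ E ∧ ‖e‖ = 1 ∧ ∃ t : ℝ, 0 < t ∧ R.mkQ e = t • b i := by
    intro i
    have hbmem : b i ∈ Submodule.map R.mkQ E := hmap ▸ Submodule.mem_top
    obtain ⟨a, haE, ha⟩ := hbmem
    have ha0 : a ≠ 0 := by
      rintro rfl
      exact b.ne_zero i (by simpa using ha.symm)
    have hna : ‖a‖ ≠ 0 := norm_ne_zero_iff.mpr ha0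
    refine ⟨‖a‖⁻¹ • a, E.smul_mem _ haE, ?_, ‖a‖⁻¹, by positivity, ?_⟩
    · rw [norm_smul, norm_inv, norm_norm, inv_mul_cancel₀ hna]
    · rw [map_smul, ha]
  choose e heE henorm t ht hte using hlift
  -- the span of the `e i` together with `R` is everything
  have hspan : Submodule.span ℝ (Set.range fun i => t i • b i) = ⊤ := by
    rw [eq_top_iff, ← b.span_eq]
    refine Submodule.span_le.mpr ?_
    rintro _ ⟨i, rfl⟩
    have hbi : b i = (t i)⁻¹ • (t i • b i) := by
      rw [smul_smul, inv_mul_cancel₀ (ht i).ne', one_smul]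
    rw [hbi]
    exact Submodule.smul_mem _ _ (Submodule.subset_span ⟨i, rfl⟩)
  have hsup_e : R ⊔ Submodule.span ℝ (Set.range e) = ⊤ := by
    refine (Submodule.map_mkQ_eq_top _ _).mp ?_
    rw [Submodule.map_span, ← Set.range_comp]
    have hcomp : (R.mkQ ∘ e) = fun i => t i • b i := funext hte
    rw [hcomp, hspan]
  -- the annihilator of R inside the topological dual of Y
  let W : Submodule ℝ (Y →L[ℝ] ℝ) :=
    { carrier := {φ | ∀ y ∈ R, φ y = 0}
      add_mem' := fun {a c} ha hc y hy => by
        simp only [ContinuousLinearMap.add_apply, ha y hy, hc y hy, add_zero]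
      zero_mem' := fun y hy => rfl
      smul_mem' := fun r φ hφ y hy => by
        simp only [ContinuousLinearMap.coe_smul', Pi.smul_apply, hφ y hy, smul_zero] }
  have hWmem : ∀ φ : Y →L[ℝ] ℝ, φ ∈ W ↔ ∀ y ∈ R, φ y = 0 := fun φ => Iff.rfl
  -- any annihilating functional killing all `e i` is zero
  have keyzero : ∀ φ : Y →L[ℝ] ℝ, φ ∈ W → (∀ i, φ (e i) = 0) → φ = 0 := by
    intro φ hφW hφe
    have hker2 : R ⊔ Submodule.span ℝ (Set.range e) ≤ LinearMap.ker (φ : Y →ₗ[ℝ] ℝ) := by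
      refine sup_le ?_ ?_
      · intro y hy
        exact LinearMap.mem_ker.mpr (hφW y hy)
      · refine Submodule.span_le.mpr ?_
        rintro _ ⟨i, rfl⟩
        exact LinearMap.mem_ker.mpr (hφe i)
    rw [hsup_e] at hker2
    have : LinearMap.ker (φ : Y →ₗ[ℝ] ℝ) = ⊤ := top_le_iff.mp hker2
    have hzero : (φ : Y →ₗ[ℝ] ℝ) = 0 := LinearMap.ker_eq_top.mp this
    exact ContinuousLinearMap.coe_injective hzero
  -- W is finite dimensional
  haveI hWfd : FiniteDimensional ℝ ↥W := by
    let L : ↥W →ₗ[ℝ] Module.Dual ℝ (Y ⧸ R) :=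
      { toFun := fun φ => R.liftQ ((φ : Y →L[ℝ] ℝ) : Y →ₗ[ℝ] ℝ)
          (fun y hy => LinearMap.mem_ker.mpr (φ.2 y hy))
        map_add' := fun a c => by
          refine Submodule.linearMap_qext _ ?_
          ext y
          simp
        map_smul' := fun r a => by
          refine Submodule.linearMap_qext _ ?_
          ext y
          simp }
    have hinj : Function.Injective L := by
      intro a c hac
      apply Subtype.ext
      apply ContinuousLinearMap.coe_injective
      apply LinearMap.ext
      intro y
      have h := LinearMap.congr_fun hac (R.mkQ y)
      simpa [L, Submodule.liftQ_apply, Submodule.mkQ_apply] using h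
    exact FiniteDimensional.of_injective L hinj
  haveI : ProperSpace ↥W := FiniteDimensional.proper ℝ ↥W
  -- the evaluation function on W
  set ψ : ↥W → ℝ := fun φ => ∑ i, |(φ : Y →L[ℝ] ℝ) (e i)| with hψdef
  have hψcont : Continuous ψ := by
    apply continuous_finset_sum
    intro i _
    exact (((ContinuousLinearMap.apply ℝ ℝ (e i)).continuous).comp
      continuous_subtype_val).abs
  have hsc : IsCompact (Metric.sphere (0 : ↥W) 1) := isCompact_sphere 0 1
  have hsne : (Metric.sphere (0 : ↥W) 1).Nonempty := by
    obtain ⟨x, -, hx⟩ := SetLike.exists_of_lt (lt_top_iff_ne_top.mpr htop : R < ⊤)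
    obtain ⟨f, hfne, hfW⟩ := aux_vanish R hclosed hx
    have hfW' : f ∈ W := hfW
    set w : ↥W := ⟨f, hfW'⟩ with hwdef
    have hwne : ‖w‖ ≠ 0 := by
      simp only [norm_ne_zero_iff (E := ↥W)]
      intro h
      exact hfne (by simpa [hwdef] using congrArg Subtype.val h)
    refine ⟨‖w‖⁻¹ • w, (mem_sphere_zero_iff_norm (E := ↥W)).mpr ?_⟩
    have hns : ‖‖w‖⁻¹ • w‖ = ‖‖w‖⁻¹‖ * ‖w‖ := norm_smul (‖w‖⁻¹) (w : Y →L[ℝ] ℝ)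
    rw [hns, norm_inv, norm_norm, inv_mul_cancel₀ hwne]
  obtain ⟨φ₀, hφ₀mem, hφ₀min⟩ := hsc.exists_isMinOn hsne hψcont.continuousOn
  set c₀ := ψ φ₀ with hc₀def
  have hφ₀ne : (φ₀ : Y →L[ℝ] ℝ) ≠ 0 := by
    intro h
    have h0 : φ₀ = 0 := Subtype.ext h
    rw [h0] at hφ₀mem
    simp at hφ₀mem
  have hc₀pos : 0 < c₀ := by
    have hex : ∃ i : Fin n, (φ₀ : Y →L[ℝ] ℝ) (e i) ≠ 0 := by
      by_contra h
      push_neg at h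
      exact hφ₀ne (keyzero _ φ₀.2 h)
    obtain ⟨i, hi⟩ := hex
    refine Finset.sum_pos' (fun j _ => abs_nonneg _) ⟨i, Finset.mem_univ i, ?_⟩
    exact abs_pos.mpr hi
  have hnR : (0 : ℝ) < n := by exact_mod_cast hn
  refine ⟨c₀ / (2 * n), div_pos hc₀pos (by linarith), ?_⟩
  intro E' hE' hdist
  by_contra hne
  -- R ⊔ E' is closed
  haveI : FiniteDimensional ℝ ↥(Submodule.map R.mkQ E') :=
    Module.Finite.map E' R.mkQ
  have h1 : IsClosed ((Submodule.map R.mkQ E' : Submodule ℝ (Y ⧸ R)) : Set (Y ⧸ R)) :=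
    Submodule.closed_of_finiteDimensional _
  have hVcl : IsClosed ((R ⊔ E' : Submodule ℝ Y) : Set Y) := by
    have h3 : ((R ⊔ E' : Submodule ℝ Y) : Set Y)
        = R.mkQ ⁻¹' (Submodule.map R.mkQ E' : Set (Y ⧸ R)) := by
      rw [← Submodule.comap_map_mkQ R E']
      rfl
    rw [h3]
    exact h1.preimage (Submodule.isOpenQuotientMap_mkQ R).continuous
  obtain ⟨x, -, hx⟩ := SetLike.exists_of_lt (lt_top_iff_ne_top.mpr hne : R ⊔ E' < ⊤)
  obtain ⟨f, hfne, hfV⟩ := aux_vanish (R ⊔ E') hVcl hx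
  have hfW : f ∈ W := fun y hy => hfV y (Submodule.mem_sup_left hy)
  set w : ↥W := ⟨f, hfW⟩ with hwdef
  have hwne : ‖w‖ ≠ 0 := by
    simp only [norm_ne_zero_iff (E := ↥W)]
    intro h
    exact hfne (by simpa [hwdef] using congrArg Subtype.val h)
  set g : ↥W := ‖w‖⁻¹ • w with hgdef
  have hgnorm : ‖g‖ = 1 := by
    have hns : ‖‖w‖⁻¹ • w‖ = ‖‖w‖⁻¹‖ * ‖w‖ := norm_smul (‖w‖⁻¹) (w : Y →L[ℝ] ℝ)
    rw [hgdef, hns, norm_inv, norm_norm, inv_mul_cancel₀ hwne]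
  have hφg : c₀ ≤ ψ g := hφ₀min ((mem_sphere_zero_iff_norm (E := ↥W)).mpr hgnorm)
  have hex : ∃ i : Fin n, c₀ / n ≤ |(g : Y →L[ℝ] ℝ) (e i)| := by
    by_contra h
    push_neg at h
    have hlt : ψ g < ∑ _i : Fin n, c₀ / n :=
      Finset.sum_lt_sum_of_nonempty Finset.univ_nonempty (fun i _ => h i)
    rw [Finset.sum_const, Finset.card_univ, Fintype.card_fin, nsmul_eq_mul,
      mul_div_cancel₀ _ (ne_of_gt hnR)] at hlt
    linarith
  obtain ⟨i, hi⟩ := hex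
  have hinf : Metric.infDist (e i) (E' : Set Y) ≤ c₀ / (2 * n) :=
    hdist _ (heE i) (henorm i)
  have hlt2 : Metric.infDist (e i) (E' : Set Y) < c₀ / n := by
    have hhalf : c₀ / (2 * n) < c₀ / n := by
      rw [div_lt_div_iff₀ (by linarith) hnR]
      nlinarith
    linarith
  obtain ⟨y, hyE', hy⟩ := (Metric.infDist_lt_iff ⟨0, E'.zero_mem⟩).mp hlt2
  have hgy : (g : Y →L[ℝ] ℝ) y = 0 := by
    have hfy : f y = 0 := hfV y (Submodule.mem_sup_right hyE')
    rw [hgdef]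
    simp [hwdef, hfy]
  have hgopnorm : ‖(g : Y →L[ℝ] ℝ)‖ = 1 := hgnorm
  have hb2 : |(g : Y →L[ℝ] ℝ) (e i)| ≤ ‖e i - y‖ := by
    have heq : (g : Y →L[ℝ] ℝ) (e i) = (g : Y →L[ℝ] ℝ) (e i - y) := by
      rw [map_sub, hgy, sub_zero]
    rw [heq]
    calc |(g : Y →L[ℝ] ℝ) (e i - y)| ≤ ‖(g : Y →L[ℝ] ℝ)‖ * ‖e i - y‖ :=
          (g : Y →L[ℝ] ℝ).le_opNorm _
      _ = ‖e i - y‖ := by rw [hgopnorm, one_mul]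
  have hdy : ‖e i - y‖ < c₀ / n := by rwa [dist_eq_norm] at hy
  linarith [hi.trans hb2]
end

section
/- Let Y be a real Banach space, let L be a closed linear subspace of Y, and let E be a finite-dimensional linear subspace of Y with Y = L + E. For each ε > 0 let T_ε : E → Y be a linear map, and suppose that sup_{x ∈ E, ‖x‖ = 1} ‖T_ε x − x‖ tends to 0 as ε tends to 0 from above. Then there exists ε₀ > 0 such that for all 0 < ε < ε₀ one has Y = L + T_ε(E). -/
set_option maxHeartbeats 1000000 in
set_option synthInstance.maxHeartbeats 1000000 in
/-- **Abstract mechanism behind Lemma 3.7.** If `Y = L + E` with `L` closed and `E`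
finite dimensional, and `T_ε : E → Y` are linear maps with
`sup_{x ∈ E, ‖x‖ = 1} ‖T_ε x - x‖ → 0` as `ε → 0⁺`, then for all sufficiently small
`ε > 0` one has `Y = L + T_ε(E)`. -/
theorem stmt_5
    {Y : Type*} [NormedAddCommGroup Y] [NormedSpace ℝ Y] [CompleteSpace Y]
    (L : Submodule ℝ Y) (hL : IsClosed (L : Set Y))
    (E : Submodule ℝ Y) (hE : FiniteDimensional ℝ E)
    (hsum : L ⊔ E = ⊤)
    (T : ℝ → (E →ₗ[ℝ] Y))
    (hT : Filter.Tendsto (fun ε => ⨆ x : {x : E // ‖x‖ = 1}, ‖T ε x - (x : Y)‖)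
      (nhdsWithin 0 (Set.Ioi 0)) (nhds 0)) :
    ∃ ε₀ > 0, ∀ ε : ℝ, 0 < ε → ε < ε₀ → L ⊔ LinearMap.range (T ε) = ⊤ := by
  classical
  haveI := hL
  set S : ℝ → ℝ := fun ε => ⨆ x : {x : E // ‖x‖ = 1}, ‖T ε x - (x : Y)‖ with hSdef
  -- nonnegativity of S
  have hS0 : ∀ ε, 0 ≤ S ε := fun ε => Real.iSup_nonneg fun x => norm_nonneg _
  -- boundedness of the sup family
  have hbdd : ∀ ε, BddAbove (Set.range fun x : {x : E // ‖x‖ = 1} => ‖T ε x - (x : Y)‖) := by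
    intro ε
    have hcont : Continuous fun x : E => ‖T ε x - (x : Y)‖ :=
      ((T ε).continuous_of_finiteDimensional.sub continuous_subtype_val).norm
    have hcomp : IsCompact ((fun x : E => ‖T ε x - (x : Y)‖) '' Metric.sphere 0 1) :=
      (isCompact_sphere (0 : E) 1).image hcont
    refine hcomp.bddAbove.mono ?_
    rintro r ⟨x, rfl⟩
    exact ⟨x.1, by simp [mem_sphere_zero_iff_norm, x.2], rfl⟩
  -- key pointwise bound
  have hkey : ∀ ε, ∀ x : E, ‖T ε x - (x : Y)‖ ≤ S ε * ‖x‖ := by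
    intro ε x
    rcases eq_or_ne x 0 with rfl | hx
    · simp
    · have hnx : (0 : ℝ) < ‖x‖ := norm_pos_iff.mpr hx
      set u : E := ‖x‖⁻¹ • x with hu
      have hun : ‖u‖ = 1 := by
        rw [hu, norm_smul, norm_inv, norm_norm, inv_mul_cancel₀ hnx.ne']
      have hxu : x = ‖x‖ • u := by
        rw [hu, smul_smul, mul_inv_cancel₀ hnx.ne', one_smul]
      have h1 : ‖T ε x - (x : Y)‖ = ‖x‖ * ‖T ε u - (u : Y)‖ := by
        conv_lhs => rw [hxu]
        rw [map_smul]
        have : ((‖x‖ • u : E) : Y) = ‖x‖ • (u : Y) := rfl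
        rw [this, ← smul_sub, norm_smul, Real.norm_eq_abs, abs_of_pos hnx]
      have h2 : ‖T ε u - (u : Y)‖ ≤ S ε :=
        le_ciSup (hbdd ε) (⟨u, hun⟩ : {x : E // ‖x‖ = 1})
      rw [h1, mul_comm]
      exact mul_le_mul_of_nonneg_right h2 hnx.le
  -- the quotient space
  set V := Y ⧸ L with hV
  set q : Y →ₗ[ℝ] V := L.mkQ with hq
  have hqnorm : ∀ y : Y, ‖q y‖ ≤ ‖y‖ := fun y => Submodule.Quotient.norm_mk_le L y
  -- the reference map and its surjectivity
  set l₀ : E →ₗ[ℝ] V := q ∘ₗ E.subtype with hl₀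
  have hsurj0 : LinearMap.range l₀ = ⊤ := by
    rw [hl₀, LinearMap.range_comp, Submodule.range_subtype, hq,
      Submodule.map_mkQ_eq_top]
    exact hsum
  haveI : FiniteDimensional ℝ V :=
    Module.Finite.of_surjective l₀ (LinearMap.range_eq_top.mp hsurj0)
  -- right inverse
  obtain ⟨g, hg⟩ := l₀.exists_rightInverse_of_surjective hsurj0
  set G : V →L[ℝ] E := LinearMap.toContinuousLinearMap g with hG
  set f₀ : E →L[ℝ] V := LinearMap.toContinuousLinearMap l₀ with hf₀
  have hf₀G : f₀.comp G = ContinuousLinearMap.id ℝ V := by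
    ext v
    have := LinearMap.congr_fun hg v
    simpa [hf₀, hG] using this
  -- operator norm estimate
  set fE : ℝ → (E →L[ℝ] V) := fun ε =>
    LinearMap.toContinuousLinearMap (q ∘ₗ T ε) with hfE
  have hop : ∀ ε, ‖f₀ - fE ε‖ ≤ S ε := by
    intro ε
    refine ContinuousLinearMap.opNorm_le_bound _ (hS0 ε) fun x => ?_
    have h1 : (f₀ - fE ε) x = q ((x : Y) - T ε x) := by
      simp [hfE, hf₀, hl₀, map_sub]
    rw [h1]
    refine (hqnorm _).trans ?_
    rw [norm_sub_rev]
    exact hkey ε x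
  -- choose ε₀
  set δ : ℝ := (‖G‖ + 1)⁻¹ with hδdef
  have hGpos : (0 : ℝ) < ‖G‖ + 1 := by positivity
  have hδ : 0 < δ := by positivity
  have hev : ∀ᶠ ε in nhdsWithin 0 (Set.Ioi 0), S ε < δ :=
    hT.eventually (eventually_lt_nhds hδ)
  rw [eventually_nhdsWithin_iff] at hev
  obtain ⟨s, hs, hs0⟩ := eventually_nhds_iff.mp hev
  obtain ⟨ε₀, hε₀pos, hball⟩ := Metric.isOpen_iff.mp hs0.1 0 hs0.2
  refine ⟨ε₀, hε₀pos, fun ε hε1 hε2 => ?_⟩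
  have hSε : S ε < δ := by
    apply hs
    · exact hball (by simp [Real.dist_eq, abs_of_pos hε1, hε2])
    · exact hε1
  -- the perturbed map is surjective
  have hnorm1 : ‖ContinuousLinearMap.id ℝ V - (fE ε).comp G‖ < 1 := by
    have heq : ContinuousLinearMap.id ℝ V - (fE ε).comp G = (f₀ - fE ε).comp G := by
      rw [ContinuousLinearMap.sub_comp, hf₀G]
    rw [heq]
    calc ‖(f₀ - fE ε).comp G‖ ≤ ‖f₀ - fE ε‖ * ‖G‖ := ContinuousLinearMap.opNorm_comp_le _ _
      _ ≤ S ε * (‖G‖ + 1) :=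
          mul_le_mul (hop ε) (by linarith [norm_nonneg G]) (norm_nonneg G) (hS0 ε)
      _ < δ * (‖G‖ + 1) := by
          exact mul_lt_mul_of_pos_right hSε hGpos
      _ = 1 := by rw [hδdef]; field_simp
  -- build a unit
  set h : V →L[ℝ] V := (fE ε).comp G with hh
  have hone : ‖(1 : V →L[ℝ] V) - h‖ < 1 := by
    exact hnorm1
  set u : (V →L[ℝ] V)ˣ := Units.oneSub ((1 : V →L[ℝ] V) - h) hone with huu
  have huval : (u : V →L[ℝ] V) = h := by
    rw [huu, Units.val_oneSub, sub_sub_cancel]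
  have hsurjε : Function.Surjective (fE ε) := by
    intro v
    refine ⟨G (((u⁻¹ : (V →L[ℝ] V)ˣ) : V →L[ℝ] V) v), ?_⟩
    have : h (((u⁻¹ : (V →L[ℝ] V)ˣ) : V →L[ℝ] V) v) = v := by
      have := u.mul_inv
      calc h (((u⁻¹ : (V →L[ℝ] V)ˣ) : V →L[ℝ] V) v)
          = ((u : V →L[ℝ] V) * (u⁻¹ : (V →L[ℝ] V)ˣ)) v := by
            rw [huval]; rfl
        _ = v := by rw [u.mul_inv]; rfl
    simpa [hh] using this
  -- conclude
  have hrange : LinearMap.range (q ∘ₗ T ε) = ⊤ := by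
    rw [LinearMap.range_eq_top]
    intro v
    obtain ⟨x, hx⟩ := hsurjε v
    exact ⟨x, by simpa [hfE] using hx⟩
  rw [LinearMap.range_comp, hq, Submodule.map_mkQ_eq_top] at hrange
  exact hrange
end
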